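/- Let Ω ⊂ ℝⁿ be a bounded open set, (Y,d) a CAT(1) space, P ∈ Y and 0 < τ < π/4, and let f : Ω → Y be a Lebesgue-measurable map with separable range such that d(f(x),P) < τ for a.e. x (so ∫_Ω d²(f(x),P) dx < ∞). For every ε > 0, setting Ω_ε = {x ∈ Ω : dist(x, ∂Ω) > ε}, there exists a Lipschitz continuous map h_ε : Ω_ε → Y such that ∫_{Ω_ε} d²(f(x), h_ε(x)) dx < ε. -/

import Mathlib

open scoped RealInnerProductSpace

noncomputable def sphereDist (x y : EuclideanSpace ℝ (Fin 3)) : ℝ :=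
  Real.arccos ⟪x, y⟫

open Classical in
noncomputable def sphereInterp (x y : EuclideanSpace ℝ (Fin 3)) (t : ℝ) :
    EuclideanSpace ℝ (Fin 3) :=
  if Real.sin (sphereDist x y) = 0 then x
  else (Real.sin ((1 - t) * sphereDist x y) / Real.sin (sphereDist x y)) • x
     + (Real.sin (t * sphereDist x y) / Real.sin (sphereDist x y)) • y

/-- A CAT(1) structure on a complete metric space `Y`: every pair of points at
distance `< π` is joined by a constant-speed minimizing geodesic
`t ↦ interp P Q t` (the point `(1-t)P + tQ`, at distance `t·d(P,Q)` from `P`),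
and every geodesic triangle of perimeter `< 2π` satisfies the CAT(1)
comparison inequality with respect to any comparison triangle on the unit
sphere `S² ⊂ ℝ³` (with the angular metric). -/
structure CAT1Space (Y : Type*) [MetricSpace Y] [CompleteSpace Y] where
  interp : Y → Y → ℝ → Y
  interp_zero : ∀ P Q : Y, dist P Q < Real.pi → interp P Q 0 = P
  interp_one : ∀ P Q : Y, dist P Q < Real.pi → interp P Q 1 = Q
  interp_dist : ∀ P Q : Y, dist P Q < Real.pi →
    ∀ s t : ℝ, s ∈ Set.Icc (0:ℝ) 1 → t ∈ Set.Icc (0:ℝ) 1 →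
      dist (interp P Q s) (interp P Q t) = |s - t| * dist P Q
  comparison : ∀ P Q R : Y,
    dist P Q + dist Q R + dist R P < 2 * Real.pi →
    ∀ p q r : EuclideanSpace ℝ (Fin 3), ‖p‖ = 1 → ‖q‖ = 1 → ‖r‖ = 1 →
      sphereDist p q = dist P Q → sphereDist q r = dist Q R →
      sphereDist r p = dist R P →
      ∀ s t : ℝ, s ∈ Set.Icc (0:ℝ) 1 → t ∈ Set.Icc (0:ℝ) 1 →
        dist (interp P Q t) (interp R Q s) ≤
          sphereDist (sphereInterp p q t) (sphereInterp r q s)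

open MeasureTheory

/-- `L²` approximation of a map into a small ball of a CAT(1) space by
Lipschitz maps on the subdomain at distance `> ε` from the boundary. -/
theorem statement11 (n : ℕ) (Ω : Set (EuclideanSpace ℝ (Fin n)))
    (hΩo : IsOpen Ω) (hΩb : Bornology.IsBounded Ω)
    (Y : Type*) [MetricSpace Y] [CompleteSpace Y] (H : CAT1Space Y)
    (P : Y) (τ : ℝ) (hτ0 : 0 < τ) (hτ : τ < Real.pi / 4)
    (f : EuclideanSpace ℝ (Fin n) → Y)
    (hf : AEStronglyMeasurable f (volume.restrict Ω))
    (hball : ∀ᵐ x ∂(volume.restrict Ω), dist (f x) P < τ)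
    (ε : ℝ) (hε : 0 < ε) :
    ∃ (h : EuclideanSpace ℝ (Fin n) → Y) (K : NNReal),
      LipschitzOnWith K h {x ∈ Ω | ε < Metric.infDist x (frontier Ω)} ∧
      (∫ x in {x ∈ Ω | ε < Metric.infDist x (frontier Ω)},
          dist (f x) (h x) ^ 2) < ε := by
  classical
  letI : MeasurableSpace Y := borel Y
  haveI : BorelSpace Y := ⟨rfl⟩
  set S : Set (EuclideanSpace ℝ (Fin n)) :=
    {x ∈ Ω | ε < Metric.infDist x (frontier Ω)} with hSdef
  have hSsub : S ⊆ Ω := fun x hx => hx.1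
  have hSopen : IsOpen S := by
    have : S = Ω ∩ {x | ε < Metric.infDist x (frontier Ω)} := rfl
    rw [this]
    exact hΩo.inter (isOpen_lt continuous_const (Metric.continuous_infDist_pt _))
  have hSm : MeasurableSet S := hSopen.measurableSet
  have hSfin : volume S ≠ ⊤ :=
    ((measure_mono hSsub).trans_lt hΩb.measure_lt_top).ne
  set ν : Measure (EuclideanSpace ℝ (Fin n)) := volume.restrict S with hνdef
  haveI : IsFiniteMeasure ν := by
    constructor
    rw [hνdef, Measure.restrict_apply_univ, lt_top_iff_ne_top]
    exact hSfin
  set g : EuclideanSpace ℝ (Fin n) → Y := hf.mk f with hgdef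
  have hgsm : StronglyMeasurable g := hf.stronglyMeasurable_mk
  have hmg : Measurable g := hgsm.measurable
  have hfgS : f =ᵐ[ν] g := ae_restrict_of_ae_restrict_of_subset hSsub hf.ae_eq_mk
  have hballS : ∀ᵐ x ∂ν, dist (f x) P < τ :=
    ae_restrict_of_ae_restrict_of_subset hSsub hball
  have hgball : ∀ᵐ x ∂ν, dist (g x) P < τ := by
    filter_upwards [hfgS, hballS] with x h1 h2
    rwa [← h1]
  -- the separable target set
  set T : Set Y := (Set.range g ∩ Metric.closedBall P τ) ∪ {P} with hTdef
  haveI : TopologicalSpace.SeparableSpace T := by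
    refine ((hgsm.isSeparable_range.mono Set.inter_subset_left).union ?_).separableSpace
    exact (Set.finite_singleton P).isSeparable
  have hPT : P ∈ T := Or.inr rfl
  have hTball : ∀ z ∈ T, dist z P ≤ τ := by
    rintro z (⟨-, hz⟩ | hz)
    · exact Metric.mem_closedBall.mp hz
    · rw [hz]; simp [hτ0.le]
  -- approximating simple functions
  set sq : ℕ → SimpleFunc (EuclideanSpace ℝ (Fin n)) Y :=
    fun k => SimpleFunc.approxOn g hmg T P hPT k with hsqdef
  have hsqT : ∀ k x, sq k x ∈ T := fun k x => SimpleFunc.approxOn_mem hmg hPT k x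
  have hsqP : ∀ k x, dist (sq k x) P ≤ τ := fun k x => hTball _ (hsqT k x)
  have hdistb : ∀ k, ∀ᵐ x ∂ν, dist (g x) (sq k x) ≤ 2 * τ := by
    intro k
    filter_upwards [hgball] with x hx
    calc dist (g x) (sq k x) ≤ dist (g x) P + dist P (sq k x) := dist_triangle _ _ _
      _ ≤ τ + τ := add_le_add hx.le (by rw [dist_comm]; exact hsqP k x)
      _ = 2 * τ := by ring
  have hint : Filter.Tendsto (fun k => ∫ x, dist (g x) (sq k x) ^ 2 ∂ν)
      Filter.atTop (nhds 0) := by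
    have h0 : (0 : ℝ) = ∫ _x, (0 : ℝ) ∂ν := by simp
    rw [h0]
    refine tendsto_integral_of_dominated_convergence (fun _ => (2 * τ) ^ 2)
      (fun k => ?_) (integrable_const _) (fun k => ?_) ?_
    · exact ((hgsm.dist (sq k).stronglyMeasurable).measurable.pow_const 2).aestronglyMeasurable
    · filter_upwards [hdistb k] with x hx
      rw [Real.norm_eq_abs, abs_of_nonneg (by positivity)]
      exact pow_le_pow_left₀ dist_nonneg hx 2
    · filter_upwards [hgball] with x hx
      have hgT : g x ∈ closure T := subset_closure
        (Or.inl ⟨Set.mem_range_self x, Metric.mem_closedBall.mpr hx.le⟩)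
      have htd : Filter.Tendsto (fun m => sq m x) Filter.atTop (nhds (g x)) := by
        simp only [hsqdef]
        exact SimpleFunc.tendsto_approxOn hmg hPT hgT
      have : Filter.Tendsto (fun m => dist (g x) (sq m x)) Filter.atTop
          (nhds (dist (g x) (g x))) := tendsto_const_nhds.dist htd
      rw [dist_self] at this
      simpa using this.pow 2
  obtain ⟨k, hk⟩ := (hint.eventually_lt_const (by positivity : (0:ℝ) < ε / 4)).exists
  set s : SimpleFunc (EuclideanSpace ℝ (Fin n)) Y := sq k with hsdefn
  -- fibers and compact approximations
  set A : Y → Set (EuclideanSpace ℝ (Fin n)) := fun y => S ∩ s ⁻¹' {y} with hAdef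
  have hAm : ∀ y, MeasurableSet (A y) := fun y => hSm.inter (s.measurableSet_fiber y)
  have hAfin : ∀ y, volume (A y) ≠ ⊤ :=
    fun y => ((measure_mono Set.inter_subset_left).trans_lt hSfin.lt_top).ne
  set F : Finset Y := s.range with hFdef
  set c : ℝ := ε / (16 * τ ^ 2 + 1) with hcdef
  have hc0 : 0 < c := by positivity
  set η : ENNReal := ENNReal.ofReal c / (F.card + 1) with hηdef
  have hη0 : η ≠ 0 := by
    rw [hηdef]
    refine ENNReal.div_ne_zero.mpr ⟨?_, ?_⟩
    · exact (ENNReal.ofReal_pos.mpr hc0).ne'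
    · exact (ENNReal.add_lt_top.mpr ⟨ENNReal.natCast_lt_top _, ENNReal.one_lt_top⟩).ne
  have hcomp : ∀ y, ∃ K, K ⊆ A y ∧ IsCompact K ∧ volume (A y \ K) < η :=
    fun y => (hAm y).exists_isCompact_diff_lt (hAfin y) hη0
  choose C hCsub hCcomp hCsmall using hcomp
  set F' : Finset Y := F.filter (fun y => (C y).Nonempty) with hF'def
  have hF'ne : ∀ y ∈ F', (C y).Nonempty := fun y hy => (Finset.mem_filter.mp hy).2
  -- distance to P of values
  have hyball : ∀ y ∈ F', dist P y ≤ τ := by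
    intro y hy
    have : y ∈ Set.range s := SimpleFunc.mem_range.mp (Finset.mem_filter.mp hy).1
    obtain ⟨x, rfl⟩ := this
    rw [dist_comm]
    exact hTball _ (hsqT k x)
  have hpilt : ∀ y ∈ F', dist P y < Real.pi := by
    intro y hy
    have hpi := Real.pi_pos
    have := hyball y hy
    linarith
  -- separation of compact pieces
  have hpair : ∀ p : Y × Y, ∃ d, 0 < d ∧ (p.1 ∈ F' → p.2 ∈ F' → p.1 ≠ p.2 →
      Disjoint (Metric.thickening d (C p.1)) (Metric.thickening d (C p.2))) := by
    intro p
    by_cases hp : p.1 ∈ F' ∧ p.2 ∈ F' ∧ p.1 ≠ p.2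
    · have hdisj : Disjoint (C p.1) (C p.2) := by
        rw [Set.disjoint_left]
        intro a ha1 ha2
        have h1 : s a = p.1 := (hCsub p.1 ha1).2
        have h2 : s a = p.2 := (hCsub p.2 ha2).2
        exact hp.2.2 (h1 ▸ h2)
      obtain ⟨d, hd0, hd⟩ := hdisj.exists_thickenings (hCcomp _) (hCcomp _).isClosed
      exact ⟨d, hd0, fun _ _ _ => hd⟩
    · exact ⟨1, one_pos, fun h1 h2 h3 => absurd ⟨h1, h2, h3⟩ hp⟩
  choose df hdf0 hdf using hpair
  have hδex : ∃ δ : ℝ, 0 < δ ∧ ∀ y ∈ F', ∀ y' ∈ F', y ≠ y' → ∀ x,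
      Metric.infDist x (C y) < δ → Metric.infDist x (C y') < δ → False := by
    rcases (F' ×ˢ F').eq_empty_or_nonempty with hPe | hPne
    · refine ⟨1, one_pos, fun y hy y' hy' hne x _ _ => ?_⟩
      have : (y, y') ∈ F' ×ˢ F' := Finset.mem_product.mpr ⟨hy, hy'⟩
      rw [hPe] at this
      exact absurd this (Finset.notMem_empty _)
    · refine ⟨(F' ×ˢ F').inf' hPne df, (Finset.lt_inf'_iff _).mpr fun p _ => hdf0 p, ?_⟩
      intro y hy y' hy' hne x h1 h2
      have hp : (y, y') ∈ F' ×ˢ F' := Finset.mem_product.mpr ⟨hy, hy'⟩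
      have hle : (F' ×ˢ F').inf' hPne df ≤ df (y, y') := Finset.inf'_le _ hp
      have hx1 : x ∈ Metric.thickening (df (y, y')) (C y) :=
        (Metric.mem_thickening_iff_infDist_lt (hF'ne y hy)).mpr (h1.trans_le hle)
      have hx2 : x ∈ Metric.thickening (df (y, y')) (C y') :=
        (Metric.mem_thickening_iff_infDist_lt (hF'ne y' hy')).mpr (h2.trans_le hle)
      exact Set.disjoint_left.mp (hdf (y, y') hy hy' hne) hx1 hx2
  obtain ⟨δ, hδ0, hsep⟩ := hδex
  have h2δ : (0:ℝ) ≤ 2 / δ := div_nonneg (by norm_num) hδ0.le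
  have hstep : ∀ d : ℝ, 0 ≤ d → 2 / δ * d * τ ≤ 4 * τ / δ * d := by
    intro d hd
    rw [show 2 / δ * d * τ = 2 * τ * d / δ by ring,
        show 4 * τ / δ * d = 4 * τ * d / δ by ring]
    exact (div_le_div_iff_of_pos_right hδ0).mpr (by nlinarith)
  -- bump functions
  set φ : Y → EuclideanSpace ℝ (Fin n) → ℝ :=
    fun y x => max (1 - (2 / δ) * Metric.infDist x (C y)) 0 with hφdef
  have hφicc : ∀ y x, φ y x ∈ Set.Icc (0:ℝ) 1 := by
    intro y x
    constructor
    · exact le_max_right _ _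
    · refine max_le ?_ zero_le_one
      have h1 : 0 ≤ Metric.infDist x (C y) := Metric.infDist_nonneg
      nlinarith
  have hφlip : ∀ y x z, φ y x - φ y z ≤ (2 / δ) * dist x z := by
    intro y x z
    have habs : |Metric.infDist x (C y) - Metric.infDist z (C y)| ≤ dist x z := by
      rw [abs_sub_le_iff]
      constructor
      · have := Metric.infDist_le_infDist_add_dist (x := x) (y := z) (s := C y)
        linarith [this]
      · have := Metric.infDist_le_infDist_add_dist (x := z) (y := x) (s := C y)
        rw [dist_comm z x] at this
        linarith [this]
    calc φ y x - φ y z ≤ |φ y x - φ y z| := le_abs_self _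
      _ ≤ |(1 - (2 / δ) * Metric.infDist x (C y)) -
            (1 - (2 / δ) * Metric.infDist z (C y))| := abs_max_sub_max_le_abs _ _ _
      _ = (2 / δ) * |Metric.infDist x (C y) - Metric.infDist z (C y)| := by
          rw [show (1 - 2 / δ * Metric.infDist x (C y)) -
              (1 - 2 / δ * Metric.infDist z (C y)) =
              2 / δ * (Metric.infDist z (C y) - Metric.infDist x (C y)) by ring,
            abs_mul, abs_of_nonneg h2δ, abs_sub_comm]
      _ ≤ (2 / δ) * dist x z := mul_le_mul_of_nonneg_left habs h2δ
  have hφzero : ∀ y x, δ / 2 ≤ Metric.infDist x (C y) → φ y x = 0 := by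
    intro y x hx
    rw [hφdef]
    refine max_eq_right ?_
    have : 1 ≤ (2 / δ) * Metric.infDist x (C y) := by
      rw [div_mul_eq_mul_div, le_div_iff₀ hδ0]
      linarith
    linarith
  have hφone : ∀ y x, x ∈ C y → φ y x = 1 := by
    intro y x hx
    rw [hφdef]
    simp [Metric.infDist_zero_of_mem hx]
  -- the Lipschitz map
  set h : EuclideanSpace ℝ (Fin n) → Y := fun x =>
    if hx : ∃ y, y ∈ F' ∧ Metric.infDist x (C y) < δ / 2
    then H.interp P hx.choose (φ hx.choose x) else P with hhdef
  have huniq : ∀ x (hx : ∃ y, y ∈ F' ∧ Metric.infDist x (C y) < δ / 2),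
      ∀ y ∈ F', Metric.infDist x (C y) < δ / 2 → hx.choose = y := by
    intro x hx y hy hlt
    by_contra hne
    exact hsep _ hx.choose_spec.1 y hy hne x
      (hx.choose_spec.2.trans (half_lt_self hδ0)) (hlt.trans (half_lt_self hδ0))
  have hinterpP : ∀ y ∈ F', ∀ t ∈ Set.Icc (0:ℝ) 1,
      dist (H.interp P y t) P = t * dist P y := by
    intro y hy t ht
    have hpi := hpilt y hy
    have h0 := H.interp_zero P y hpi
    have hd := H.interp_dist P y hpi t 0 ht ⟨le_refl 0, zero_le_one⟩
    rw [h0] at hd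
    simpa [abs_of_nonneg ht.1] using hd
  -- Lipschitz estimate
  have hK : ∀ x z, dist (h x) (h z) ≤ (4 * τ / δ) * dist x z := by
    intro x z
    by_cases hx : ∃ y, y ∈ F' ∧ Metric.infDist x (C y) < δ / 2 <;>
      by_cases hz : ∃ y, y ∈ F' ∧ Metric.infDist z (C y) < δ / 2
    · -- both in a bump neighborhood
      rw [hhdef]
      simp only [dif_pos hx, dif_pos hz]
      set yx := hx.choose with hyx
      set yz := hz.choose with hyz
      have hyxF : yx ∈ F' := hx.choose_spec.1
      have hyzF : yz ∈ F' := hz.choose_spec.1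
      by_cases hyy : yx = yz
      · rw [hyy]
        have hd := H.interp_dist P yz (hpilt yz hyzF) (φ yz x) (φ yz z)
          (hφicc yz x) (hφicc yz z)
        rw [hd]
        have habs : |φ yz x - φ yz z| ≤ (2 / δ) * dist x z := by
          rw [abs_sub_le_iff]
          exact ⟨hφlip yz x z, by rw [dist_comm x z]; exact hφlip yz z x⟩
        calc |φ yz x - φ yz z| * dist P yz ≤ ((2 / δ) * dist x z) * τ :=
              mul_le_mul habs (hyball yz hyzF) dist_nonneg (mul_nonneg h2δ dist_nonneg)
          _ ≤ (4 * τ / δ) * dist x z := hstep _ dist_nonneg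
      · -- different bumps: far apart, both φ small
        have hφxz : φ yx z = 0 := by
          refine hφzero yx z (le_of_not_gt fun hlt => ?_)
          exact hyy ((huniq z hz yx hyxF hlt).symm)
        have hφzx : φ yz x = 0 := by
          refine hφzero yz x (le_of_not_gt fun hlt => ?_)
          exact hyy (huniq x hx yz hyzF hlt)
        have h1 : dist (H.interp P yx (φ yx x)) P ≤ ((2 / δ) * dist x z) * τ := by
          rw [hinterpP yx hyxF _ (hφicc yx x)]
          refine mul_le_mul ?_ (hyball yx hyxF) dist_nonneg (mul_nonneg h2δ dist_nonneg)
          have := hφlip yx x z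
          rw [hφxz] at this
          linarith
        have h2 : dist (H.interp P yz (φ yz z)) P ≤ ((2 / δ) * dist x z) * τ := by
          rw [hinterpP yz hyzF _ (hφicc yz z)]
          refine mul_le_mul ?_ (hyball yz hyzF) dist_nonneg (mul_nonneg h2δ dist_nonneg)
          have := hφlip yz z x
          rw [hφzx, dist_comm z x] at this
          linarith
        calc dist (H.interp P yx (φ yx x)) (H.interp P yz (φ yz z))
            ≤ dist (H.interp P yx (φ yx x)) P + dist P (H.interp P yz (φ yz z)) :=
              dist_triangle _ _ _
          _ ≤ ((2 / δ) * dist x z) * τ + ((2 / δ) * dist x z) * τ := by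
              rw [dist_comm P]
              exact add_le_add h1 h2
          _ = (4 * τ / δ) * dist x z := by ring
    · -- x in a bump, z not
      rw [hhdef]
      simp only [dif_pos hx, dif_neg hz]
      set yx := hx.choose with hyx
      have hyxF : yx ∈ F' := hx.choose_spec.1
      push_neg at hz
      have hφxz : φ yx z = 0 := hφzero yx z (hz yx hyxF)
      rw [hinterpP yx hyxF _ (hφicc yx x)]
      have hb : φ yx x ≤ (2 / δ) * dist x z := by
        have := hφlip yx x z
        rw [hφxz] at this
        linarith
      calc φ yx x * dist P yx ≤ ((2 / δ) * dist x z) * τ :=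
            mul_le_mul hb (hyball yx hyxF) dist_nonneg (mul_nonneg h2δ dist_nonneg)
        _ ≤ (4 * τ / δ) * dist x z := hstep _ dist_nonneg
    · -- z in a bump, x not
      rw [hhdef]
      simp only [dif_neg hx, dif_pos hz]
      set yz := hz.choose with hyz
      have hyzF : yz ∈ F' := hz.choose_spec.1
      push_neg at hx
      have hφzx : φ yz x = 0 := hφzero yz x (hx yz hyzF)
      rw [dist_comm P, hinterpP yz hyzF _ (hφicc yz z)]
      have hb : φ yz z ≤ (2 / δ) * dist x z := by
        have := hφlip yz z x
        rw [hφzx, dist_comm z x] at this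
        linarith
      calc φ yz z * dist P yz ≤ ((2 / δ) * dist x z) * τ :=
            mul_le_mul hb (hyball yz hyzF) dist_nonneg (mul_nonneg h2δ dist_nonneg)
        _ ≤ (4 * τ / δ) * dist x z := hstep _ dist_nonneg
    · rw [hhdef]
      simp only [dif_neg hx, dif_neg hz]
      rw [dist_self]
      exact mul_nonneg (div_nonneg (by positivity) hδ0.le) dist_nonneg
  -- h equals s on the compact pieces
  have hCval : ∀ y ∈ F', ∀ x ∈ C y, s x = y ∧ h x = y := by
    intro y hy x hxC
    have hsx : s x = y := (hCsub y hxC).2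
    have hlt : Metric.infDist x (C y) < δ / 2 := by
      rw [Metric.infDist_zero_of_mem hxC]; exact half_pos hδ0
    have hx : ∃ y', y' ∈ F' ∧ Metric.infDist x (C y') < δ / 2 := ⟨y, hy, hlt⟩
    refine ⟨hsx, ?_⟩
    rw [hhdef]
    simp only [dif_pos hx]
    rw [huniq x hx y hy hlt, hφone y x hxC]
    exact H.interp_one P y (hpilt y hy)
  -- the exceptional set
  set CU : Set (EuclideanSpace ℝ (Fin n)) := ⋃ y ∈ F', C y with hCUdef
  have hCUm : MeasurableSet CU := by
    refine (Set.Finite.isClosed_biUnion F'.finite_toSet fun y _ => (hCcomp y).isClosed).measurableSet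
  have hcover : S \ CU ⊆ ⋃ y ∈ F, (A y \ C y) := by
    rintro x ⟨hxS, hxCU⟩
    refine Set.mem_biUnion (s.mem_range_self x) ⟨⟨hxS, rfl⟩, fun hxC => ?_⟩
    have hm : s x ∈ F' := Finset.mem_filter.mpr ⟨s.mem_range_self x, ⟨x, hxC⟩⟩
    exact hxCU (Set.mem_biUnion hm hxC)
  have hmeasCU : volume (S \ CU) ≤ ENNReal.ofReal c := by
    calc volume (S \ CU) ≤ ∑ y ∈ F, volume (A y \ C y) :=
          (measure_mono hcover).trans (measure_biUnion_finset_le F _)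
      _ ≤ F.card • η := Finset.sum_le_card_nsmul F _ η fun y _ => (hCsmall y).le
      _ ≤ (F.card + 1) * η := by
          rw [nsmul_eq_mul]
          exact mul_le_mul_left (by exact_mod_cast le_self_add) η
      _ = ENNReal.ofReal c := by
          rw [hηdef]
          refine ENNReal.mul_div_cancel ?_ ?_
          · simp
          · exact (ENNReal.add_lt_top.mpr ⟨ENNReal.natCast_lt_top _, ENNReal.one_lt_top⟩).ne
  have hνCU : ν (S \ CU) ≤ ENNReal.ofReal c := by
    rw [hνdef, Measure.restrict_apply (hSm.diff hCUm)]
    exact le_trans (measure_mono Set.inter_subset_left) hmeasCU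
  -- pointwise bound
  have hpt : ∀ᵐ x ∂ν, dist (f x) (h x) ^ 2 ≤
      dist (g x) (s x) ^ 2 + (S \ CU).indicator (fun _ => 4 * τ ^ 2) x := by
    filter_upwards [hfgS, hgball, ae_restrict_mem hSm] with x hfx hbx hxS
    by_cases hxCU : x ∈ CU
    · obtain ⟨y, hyF', hxCy⟩ := Set.mem_iUnion₂.mp hxCU
      obtain ⟨hsx, hhx⟩ := hCval y hyF' x hxCy
      rw [Set.indicator_of_notMem (fun hc => hc.2 hxCU), hfx, hhx, ← hsx]
      simp
    · rw [Set.indicator_of_mem (show x ∈ S \ CU from ⟨hxS, hxCU⟩)]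
      have hhP : dist (h x) P ≤ τ := by
        by_cases hx : ∃ y, y ∈ F' ∧ Metric.infDist x (C y) < δ / 2
        · rw [hhdef]; simp only [dif_pos hx]
          rw [hinterpP _ hx.choose_spec.1 _ (hφicc _ x)]
          calc φ hx.choose x * dist P hx.choose ≤ 1 * τ :=
                mul_le_mul (hφicc _ x).2 (hyball _ hx.choose_spec.1) dist_nonneg zero_le_one
            _ = τ := one_mul τ
        · rw [hhdef]; simp only [dif_neg hx]; rw [dist_self]; exact hτ0.le
      have hd : dist (f x) (h x) ≤ 2 * τ := by
        rw [hfx]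
        calc dist (g x) (h x) ≤ dist (g x) P + dist P (h x) := dist_triangle _ _ _
          _ ≤ τ + τ := add_le_add hbx.le (by rw [dist_comm]; exact hhP)
          _ = 2 * τ := by ring
      have hsq := pow_le_pow_left₀ dist_nonneg hd 2
      have h0 : (0:ℝ) ≤ dist (g x) (s x) ^ 2 := pow_nonneg dist_nonneg 2
      nlinarith
  have hsm1 : AEStronglyMeasurable (fun x => dist (g x) (s x) ^ 2) ν :=
    ((hgsm.dist s.stronglyMeasurable).measurable.pow_const 2).aestronglyMeasurable
  have hI1 : Integrable (fun x => dist (g x) (s x) ^ 2) ν := by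
    refine Integrable.mono' (integrable_const ((2 * τ) ^ 2)) hsm1 ?_
    filter_upwards [hdistb k] with x hx
    rw [Real.norm_eq_abs, abs_of_nonneg (pow_nonneg dist_nonneg 2)]
    exact pow_le_pow_left₀ dist_nonneg hx 2
  have hI2 : Integrable ((S \ CU).indicator fun _ => 4 * τ ^ 2) ν :=
    (integrable_const (4 * τ ^ 2)).indicator (hSm.diff hCUm)
  have hle : (∫ x, dist (f x) (h x) ^ 2 ∂ν) ≤
      (∫ x, dist (g x) (s x) ^ 2 ∂ν) +
        ∫ x, (S \ CU).indicator (fun _ => 4 * τ ^ 2) x ∂ν := by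
    rw [← integral_add hI1 hI2]
    refine integral_mono_of_nonneg ?_ (hI1.add hI2) hpt
    filter_upwards with x
    exact pow_nonneg dist_nonneg 2
  have hind : (∫ x, (S \ CU).indicator (fun _ => 4 * τ ^ 2) x ∂ν) ≤ ε / 4 := by
    rw [integral_indicator_const _ (hSm.diff hCUm), smul_eq_mul]
    have h1 : (ν (S \ CU)).toReal ≤ c := ENNReal.toReal_le_of_le_ofReal hc0.le hνCU
    have h2 : (ν (S \ CU)).toReal * (4 * τ ^ 2) ≤ c * (4 * τ ^ 2) :=
      mul_le_mul_of_nonneg_right h1 (by positivity)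
    refine h2.trans ?_
    rw [hcdef, div_mul_eq_mul_div, div_le_div_iff₀ (by positivity) (by norm_num)]
    nlinarith [sq_nonneg τ, hε.le]
  refine ⟨h, Real.toNNReal (4 * τ / δ), ?_, ?_⟩
  · refine LipschitzWith.lipschitzOnWith ?_
    refine LipschitzWith.of_dist_le_mul fun x z => ?_
    rw [Real.coe_toNNReal _ (div_nonneg (by positivity) hδ0.le)]
    exact hK x z
  · calc (∫ x in S, dist (f x) (h x) ^ 2) ≤ _ := hle
      _ < ε / 4 + ε / 4 := add_lt_add_of_lt_of_le hk hind
      _ < ε := by linarith
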